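/- Fix α > 2 and s ∈ [−1,1]. The function r ↦ r² − α·c_d(s,r) on [0,∞) has a unique global maximizer, namely r_α(s) = √(1/tan(π/α)² + 1 − s²) − 1/tan(π/α); that is, for every r ≥ 0 with r ≠ r_α(s), one has r² − α·c_d(s,r) < r_α(s)² − α·c_d(s, r_α(s)). -/

import Mathlib

open MeasureTheory ProbabilityTheory Filter Real

noncomputable section

/-- The standard Gaussian measure `N(0,1)` on `ℝ`. -/
def stdGaussian : Measure ℝ := gaussianReal 0 1

instance : IsProbabilityMeasure stdGaussian :=
  inferInstanceAs (IsProbabilityMeasure (gaussianReal 0 1))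

/-- `c_d(s,r) = E[(min{|q| - |r g + s q|, 0})²]` for independent standard Gaussians `q, g`. -/
def cd (s r : ℝ) : ℝ :=
  ∫ p : ℝ × ℝ, (min (|p.1| - |r * p.2 + s * p.1|) 0) ^ 2
    ∂(stdGaussian.prod stdGaussian)

/-- `c_α = 1 / tan(π/α)`. -/
def calpha (α : ℝ) : ℝ := 1 / Real.tan (π / α)

/-- `r_α(s) = √(c_α² + 1 - s²) - c_α`. -/
def ralpha (α s : ℝ) : ℝ := Real.sqrt (calpha α ^ 2 + 1 - s ^ 2) - calpha α

open Set Topology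

namespace Stmt12Aux

/-- Closed form for `cd`. -/
def myC (s r : ℝ) : ℝ :=
  if r = 0 then 0 else
    (1/π) * ((r^2+(1-s)^2) * (π/2 - arctan ((1-s)/r))
           + (r^2+(1+s)^2) * (π/2 - arctan ((1+s)/r)) - 2*r)

/-- `π` times the derivative of `myC` divided by `2r`. -/
def psi (s r : ℝ) : ℝ := (π/2 - arctan ((1-s)/r)) + (π/2 - arctan ((1+s)/r))

/-- The angular function. -/
def gtheta (s r θ : ℝ) : ℝ := (min (|Real.cos θ| - |r * Real.sin θ + s * Real.cos θ|) 0) ^ 2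

/-- the weight on the real line after the tangent substitution -/
def mfun (s r t : ℝ) : ℝ := (min (1 - |s + r * t|) 0) ^ 2 / (1+t^2)^2

/-- The 2d gaussian weight. -/
def W (z : ℝ × ℝ) : ℝ := (2*π)⁻¹ * Real.exp (-(z.1^2+z.2^2)/2)

lemma gtheta_cont (s r : ℝ) : Continuous (gtheta s r) := by
  unfold gtheta
  fun_prop

lemma cd_zero {s : ℝ} (hs : s ∈ Set.Icc (-1:ℝ) 1) : cd s 0 = 0 := by
  have hz : ∀ p : ℝ × ℝ, (min (|p.1| - |(0:ℝ) * p.2 + s * p.1|) 0)^2 = 0 := by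
    intro p
    have hs' : |s| ≤ 1 := abs_le.mpr ⟨hs.1, hs.2⟩
    have h1 : |s * p.1| ≤ |p.1| := by
      rw [abs_mul]
      nlinarith [abs_nonneg p.1, abs_nonneg s]
    have h2 : min (|p.1| - |(0:ℝ)*p.2 + s*p.1|) 0 = 0 := by
      rw [zero_mul, zero_add]
      exact min_eq_right (by linarith)
    rw [h2]
    ring
  have h0 : (∫ p : ℝ × ℝ, (min (|p.1| - |(0:ℝ) * p.2 + s * p.1|) 0)^2
      ∂(stdGaussian.prod stdGaussian))
      = ∫ _p : ℝ × ℝ, (0:ℝ) ∂(stdGaussian.prod stdGaussian) :=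
    integral_congr_ae (Filter.Eventually.of_forall hz)
  rw [cd, h0, integral_zero]

lemma gauss_prod :
    stdGaussian.prod stdGaussian =
      (volume : Measure (ℝ×ℝ)).withDensity
        (fun z => gaussianPDF 0 1 z.1 * gaussianPDF 0 1 z.2) := by
  rw [Measure.volume_eq_prod]
  refine Measure.prod_eq fun u v hu hv => ?_
  rw [withDensity_apply _ (hu.prod hv), ← Measure.prod_restrict,
    lintegral_prod_mul ((measurable_gaussianPDF 0 1).aemeasurable)
      ((measurable_gaussianPDF 0 1).aemeasurable)]
  rw [_root_.stdGaussian, gaussianReal_apply 0 one_ne_zero u, gaussianReal_apply 0 one_ne_zero v]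

lemma pdf_mul (x y : ℝ) :
    gaussianPDFReal 0 1 x * gaussianPDFReal 0 1 y = W (x, y) := by
  unfold W
  simp only [gaussianPDFReal, NNReal.coe_one, mul_one, sub_zero]
  have ha : ((Real.sqrt (2*π))⁻¹ : ℝ) * (Real.sqrt (2*π))⁻¹ = (2*π)⁻¹ := by
    rw [← mul_inv, Real.mul_self_sqrt (by positivity)]
  have hb : Real.exp (-x^2/2) * Real.exp (-y^2/2) = Real.exp (-(x^2+y^2)/2) := by
    rw [← Real.exp_add]
    ring_nf
  calc (Real.sqrt (2*π))⁻¹ * Real.exp (-x^2/2) * ((Real.sqrt (2*π))⁻¹ * Real.exp (-y^2/2))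
      = ((Real.sqrt (2*π))⁻¹ * (Real.sqrt (2*π))⁻¹) * (Real.exp (-x^2/2) * Real.exp (-y^2/2)) := by
        ring
  _ = (2*π)⁻¹ * Real.exp (-((x,y).1^2+(x,y).2^2)/2) := by rw [ha, hb]

lemma cd_eq_volume (s r : ℝ) :
    cd s r = ∫ z : ℝ × ℝ, W z * (min (|z.1| - |r * z.2 + s * z.1|) 0) ^ 2 := by
  rw [cd, gauss_prod]
  have hmeas : Measurable fun z : ℝ × ℝ =>
      (gaussianPDFReal 0 1 z.1 * gaussianPDFReal 0 1 z.2).toNNReal :=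
    (((measurable_gaussianPDFReal 0 1).comp measurable_fst).mul
      ((measurable_gaussianPDFReal 0 1).comp measurable_snd)).real_toNNReal
  have hd : (fun z : ℝ × ℝ => gaussianPDF 0 1 z.1 * gaussianPDF 0 1 z.2)
      = fun z : ℝ × ℝ => ((gaussianPDFReal 0 1 z.1 * gaussianPDFReal 0 1 z.2).toNNReal : ENNReal) := by
    funext z
    rw [gaussianPDF, gaussianPDF,
      ← ENNReal.ofReal_mul (gaussianPDFReal_nonneg 0 1 z.1)]
    rfl
  rw [hd, integral_withDensity_eq_integral_smul hmeas]
  congr 1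
  funext z
  rw [NNReal.smul_def, smul_eq_mul,
    Real.coe_toNNReal _ (mul_nonneg (gaussianPDFReal_nonneg 0 1 z.1) (gaussianPDFReal_nonneg 0 1 z.2)),
    pdf_mul]

lemma radial : ∫ ρ in Ioi (0:ℝ), ρ^3 * Real.exp (-(ρ^2)/2) = 2 := by
  have hderiv : ∀ x ∈ Ioi (0:ℝ), HasDerivAt (fun ρ : ℝ => -(ρ^2+2) * Real.exp (-(ρ^2)/2))
      (x^3 * Real.exp (-(x^2)/2)) x := by
    intro x _
    have h1 : HasDerivAt (fun ρ : ℝ => -(ρ^2+2)) (-(2*x)) x := by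
      have := ((hasDerivAt_pow 2 x).add_const (2:ℝ)).neg
      exact this.congr_deriv (by norm_num)
    have h2 : HasDerivAt (fun ρ : ℝ => -(ρ^2)/2) (-(2*x)/2) x := by
      have := ((hasDerivAt_pow 2 x).neg).div_const (2:ℝ)
      simpa using this
    have h3 : HasDerivAt (fun ρ : ℝ => Real.exp (-(ρ^2)/2))
        (Real.exp (-(x^2)/2) * (-(2*x)/2)) x := (Real.hasDerivAt_exp _).comp x h2
    have h4 := h1.mul h3
    refine h4.congr_deriv ?_
    ring
  have hpos : ∀ x ∈ Ioi (0:ℝ), 0 ≤ x^3 * Real.exp (-(x^2)/2) := by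
    intro x hx
    have : (0:ℝ) < x := hx
    positivity
  have htend : Tendsto (fun ρ : ℝ => -(ρ^2+2) * Real.exp (-(ρ^2)/2)) atTop (𝓝 0) := by
    have key : Tendsto (fun u : ℝ => -(2*u+2) * Real.exp (-u)) atTop (𝓝 0) := by
      have h1 : Tendsto (fun u : ℝ => u * Real.exp (-u)) atTop (𝓝 0) := by
        simpa using Real.tendsto_pow_mul_exp_neg_atTop_nhds_zero 1
      have h2 : Tendsto (fun u : ℝ => Real.exp (-u)) atTop (𝓝 0) :=
        Real.tendsto_exp_neg_atTop_nhds_zero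
      have h3 := (h1.const_mul (-2)).add (h2.const_mul (-2))
      have h4 : (fun u : ℝ => -2 * (u * Real.exp (-u)) + -2 * Real.exp (-u))
          = fun u : ℝ => -(2*u+2) * Real.exp (-u) := by
        funext u; ring
      rw [h4] at h3
      simpa using h3
    have hcomp : Tendsto (fun ρ : ℝ => ρ^2/2) atTop atTop := by
      apply Tendsto.atTop_div_const (by norm_num)
      exact tendsto_pow_atTop (two_ne_zero)
    have h5 := key.comp hcomp
    have h6 : ((fun u : ℝ => -(2*u+2) * Real.exp (-u)) ∘ (fun ρ : ℝ => ρ^2/2))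
        = fun ρ : ℝ => -(ρ^2+2) * Real.exp (-(ρ^2)/2) := by
      funext ρ
      simp only [Function.comp_apply]
      ring_nf
    rw [h6] at h5
    exact h5
  have hcont : ContinuousWithinAt (fun ρ : ℝ => -(ρ^2+2) * Real.exp (-(ρ^2)/2)) (Ici 0) 0 := by
    apply Continuous.continuousWithinAt
    fun_prop
  have := integral_Ioi_of_hasDerivAt_of_nonneg hcont hderiv hpos htend
  rw [this]
  norm_num

lemma polar_step (s r : ℝ) :
    (∫ z : ℝ × ℝ, W z * (min (|z.1| - |r * z.2 + s * z.1|) 0) ^ 2)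
      = π⁻¹ * ∫ θ in Ioo (-π) π, gtheta s r θ := by
  rw [← integral_comp_polarCoord_symm
    (fun z : ℝ × ℝ => W z * (min (|z.1| - |r * z.2 + s * z.1|) 0) ^ 2)]
  rw [polarCoord_target]
  have heq : EqOn
      (fun p : ℝ × ℝ => p.1 • ((fun z : ℝ × ℝ => W z * (min (|z.1| - |r * z.2 + s * z.1|) 0) ^ 2)
        (polarCoord.symm p)))
      (fun p : ℝ × ℝ => ((2*π)⁻¹ * (p.1^3 * Real.exp (-(p.1^2)/2))) * gtheta s r p.2)
      (Ioi 0 ×ˢ Ioo (-π) π) := by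
    intro p hp
    have hρ0 : 0 < p.1 := hp.1
    simp only [polarCoord_symm_apply, smul_eq_mul]
    have hxy : (p.1 * Real.cos p.2)^2 + (p.1 * Real.sin p.2)^2 = p.1^2 := by
      have h := Real.sin_sq_add_cos_sq p.2
      nlinarith [h]
    have hW : W (p.1 * Real.cos p.2, p.1 * Real.sin p.2) = (2*π)⁻¹ * Real.exp (-(p.1^2)/2) := by
      unfold W
      simp only
      rw [hxy]
    have hF : (min (|p.1 * Real.cos p.2| - |r * (p.1 * Real.sin p.2) + s * (p.1 * Real.cos p.2)|) 0)^2
        = p.1^2 * gtheta s r p.2 := by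
      unfold gtheta
      rw [show r * (p.1 * Real.sin p.2) + s * (p.1 * Real.cos p.2)
          = p.1 * (r * Real.sin p.2 + s * Real.cos p.2) by ring]
      rw [abs_mul, abs_mul, abs_of_pos hρ0]
      rw [show p.1 * |Real.cos p.2| - p.1 * |r * Real.sin p.2 + s * Real.cos p.2|
          = p.1 * (|Real.cos p.2| - |r * Real.sin p.2 + s * Real.cos p.2|) by ring]
      have hmin : min (p.1 * (|Real.cos p.2| - |r * Real.sin p.2 + s * Real.cos p.2|)) 0
          = p.1 * min (|Real.cos p.2| - |r * Real.sin p.2 + s * Real.cos p.2|) 0 := by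
        have h5 := smul_min_of_nonneg hρ0.le
          (|Real.cos p.2| - |r * Real.sin p.2 + s * Real.cos p.2|) (0:ℝ)
        simpa [smul_eq_mul] using h5.symm
      rw [hmin, mul_pow]
    rw [hW, hF]
    ring
  rw [setIntegral_congr_fun (measurableSet_Ioi.prod measurableSet_Ioo) heq]
  rw [Measure.volume_eq_prod]
  rw [setIntegral_prod_mul (μ := (volume : Measure ℝ)) (ν := (volume : Measure ℝ))
    (f := fun ρ : ℝ => (2*π)⁻¹ * (ρ^3 * Real.exp (-(ρ^2)/2))) (g := gtheta s r)
    (Ioi 0) (Ioo (-π) π)]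
  have hrad : (∫ ρ in Ioi (0:ℝ), (2*π)⁻¹ * (ρ^3 * Real.exp (-(ρ^2)/2))) = π⁻¹ := by
    rw [MeasureTheory.integral_const_mul, radial]
    have hπ : (π:ℝ) ≠ 0 := pi_ne_zero
    field_simp
  rw [hrad]

lemma halfrange (s r : ℝ) :
    ∫ θ in Ioo (-π) π, gtheta s r θ = 2 * ∫ θ in Ioo (-(π/2)) (π/2), gtheta s r θ := by
  have hper : Function.Periodic (gtheta s r) π := by
    intro θ
    unfold gtheta
    rw [Real.cos_add_pi, Real.sin_add_pi]
    rw [show r * -Real.sin θ + s * -Real.cos θ = -(r * Real.sin θ + s * Real.cos θ) by ring]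
    rw [abs_neg, abs_neg]
  have hi : ∀ a b : ℝ, IntervalIntegrable (gtheta s r) volume a b :=
    fun a b => (gtheta_cont s r).intervalIntegrable a b
  have hππ : -π ≤ π := by linarith [pi_pos]
  have h2 : -(π/2) ≤ π/2 := by linarith [pi_pos]
  rw [← integral_Ioc_eq_integral_Ioo, ← integral_Ioc_eq_integral_Ioo,
    ← intervalIntegral.integral_of_le hππ, ← intervalIntegral.integral_of_le h2]
  have hsplit := intervalIntegral.integral_add_adjacent_intervals (hi (-π) 0) (hi 0 π)
  have e1 := hper.intervalIntegral_add_eq (-π) (-(π/2))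
  have e2 := hper.intervalIntegral_add_eq 0 (-(π/2))
  rw [show -π + π = (0:ℝ) by ring, show -(π/2) + π = π/2 by ring] at e1
  rw [show (0:ℝ) + π = π by ring, show -(π/2) + π = π/2 by ring] at e2
  linarith [hsplit, e1, e2]

lemma tansub (s r : ℝ) :
    ∫ θ in Ioo (-(π/2)) (π/2), gtheta s r θ = ∫ t : ℝ, mfun s r t := by
  have himg : arctan '' univ = Ioo (-(π/2)) (π/2) := by
    rw [image_univ, Real.range_arctan]
  rw [← himg,
    integral_image_eq_integral_abs_deriv_smul MeasurableSet.univ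
      (fun x _ => (Real.hasDerivAt_arctan x).hasDerivWithinAt)
      (Real.arctan_injective.injOn) (gtheta s r)]
  rw [Measure.restrict_univ]
  congr 1
  funext t
  have h0 : (0:ℝ) < 1 + t^2 := by positivity
  have hsq : (0:ℝ) < Real.sqrt (1+t^2) := Real.sqrt_pos.mpr h0
  rw [smul_eq_mul, abs_of_pos (show (0:ℝ) < 1/(1+t^2) by positivity)]
  unfold gtheta mfun
  rw [Real.cos_arctan, Real.sin_arctan]
  rw [abs_of_pos (show (0:ℝ) < 1/Real.sqrt (1+t^2) by positivity)]
  rw [show r * (t/Real.sqrt (1+t^2)) + s * (1/Real.sqrt (1+t^2))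
      = (s + r*t)/Real.sqrt (1+t^2) by field_simp; ring]
  rw [abs_div, abs_of_pos hsq]
  rw [show 1/Real.sqrt (1+t^2) - |s+r*t|/Real.sqrt (1+t^2)
      = (1 - |s+r*t|)/Real.sqrt (1+t^2) by ring]
  rw [show min ((1 - |s+r*t|)/Real.sqrt (1+t^2)) 0
      = min (1-|s+r*t|) 0 / Real.sqrt (1+t^2) from by
    rw [← min_div_div_right hsq.le (1-|s+r*t|) (0:ℝ), zero_div]]
  rw [div_pow, Real.sq_sqrt h0.le, div_mul_div_comm, one_mul, ← pow_two]

lemma integrable_aux (r c : ℝ) : Integrable (fun t : ℝ => (r*t+c)^2/(1+t^2)^2) := by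
  have hcont : Continuous (fun t : ℝ => (r*t+c)^2/(1+t^2)^2) := by
    apply Continuous.div
    · fun_prop
    · fun_prop
    · intro t
      positivity
  apply Integrable.mono' ((integrable_inv_one_add_sq).const_mul (2*(r^2+c^2)))
    hcont.aestronglyMeasurable
  apply Filter.Eventually.of_forall
  intro t
  have h0 : (0:ℝ) < 1 + t^2 := by positivity
  rw [Real.norm_eq_abs, abs_of_nonneg (by positivity)]
  rw [div_le_iff₀ (by positivity)]
  have key : (r*t+c)^2 ≤ 2*(r^2+c^2) * (1+t^2) := by nlinarith [sq_nonneg (r*t-c), sq_nonneg (r-c*t), sq_nonneg (r+c*t), sq_nonneg t, sq_nonneg r, sq_nonneg c]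
  have hexp : 2*(r^2+c^2) * (1+t^2)⁻¹ * (1+t^2)^2 = 2*(r^2+c^2) * (1+t^2) := by
    field_simp
  rw [hexp]
  exact key

lemma integrable_mfun (s r : ℝ) : Integrable (mfun s r) := by
  have hcont : Continuous (mfun s r) := by
    unfold mfun
    apply Continuous.div
    · fun_prop
    · fun_prop
    · intro t
      positivity
  apply Integrable.mono' (integrable_aux r s) hcont.aestronglyMeasurable
  apply Filter.Eventually.of_forall
  intro t
  have h0 : (0:ℝ) < (1+t^2)^2 := by positivity
  unfold mfun
  rw [Real.norm_eq_abs, abs_of_nonneg (by positivity)]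
  rw [div_le_div_iff_of_pos_right h0]
  rcases le_or_gt (|s + r*t|) 1 with h | h
  · rw [min_eq_right (by linarith)]
    simpa using sq_nonneg (r*t+s)
  · rw [min_eq_left (by linarith)]
    have habs : |s+r*t|^2 = (s+r*t)^2 := sq_abs _
    nlinarith [abs_nonneg (s+r*t)]

lemma hasDerivAt_H (r c t : ℝ) :
    HasDerivAt (fun t : ℝ => (r^2+c^2)/2 * arctan t + ((c^2-r^2)*t + 2*r*c)/(2*(1+t^2)))
      ((r*t-c)^2/(1+t^2)^2) t := by
  have h0 : (0:ℝ) < 1 + t^2 := by positivity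
  have h1 : HasDerivAt (fun t : ℝ => (r^2+c^2)/2 * arctan t) ((r^2+c^2)/2 * (1/(1+t^2))) t :=
    (Real.hasDerivAt_arctan t).const_mul _
  have h2 : HasDerivAt (fun t : ℝ => (c^2-r^2)*t + 2*r*c) (c^2-r^2) t := by
    simpa using ((hasDerivAt_id t).const_mul (c^2-r^2)).add_const (2*r*c)
  have h3 : HasDerivAt (fun t : ℝ => 2*(1+t^2)) (2*(2*t)) t := by
    have := ((hasDerivAt_pow 2 t).const_add (1:ℝ)).const_mul (2:ℝ)
    simpa using this
  have h4 := h2.div h3 (by positivity)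
  refine (h1.add h4).congr_deriv ?_
  field_simp
  ring

lemma tendsto_H (r c : ℝ) :
    Tendsto (fun t : ℝ => (r^2+c^2)/2 * arctan t + ((c^2-r^2)*t + 2*r*c)/(2*(1+t^2)))
      atTop (𝓝 ((r^2+c^2)/2 * (π/2))) := by
  have l1 : Tendsto (fun t : ℝ => (r^2+c^2)/2 * arctan t) atTop (𝓝 ((r^2+c^2)/2 * (π/2))) :=
    (Real.tendsto_arctan_atTop.mono_right nhdsWithin_le_nhds).const_mul _
  have ha : Tendsto (fun t : ℝ => t/(1+t^2)) atTop (𝓝 0) := by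
    have h1 : Tendsto (fun t : ℝ => (1+t^2)/t) atTop atTop := by
      apply tendsto_atTop_mono' atTop ?_ tendsto_id
      filter_upwards [eventually_ge_atTop (1:ℝ)] with t ht
      show t ≤ (1+t^2)/t
      rw [le_div_iff₀ (by linarith)]
      nlinarith
    apply h1.inv_tendsto_atTop.congr'
    filter_upwards [eventually_gt_atTop (0:ℝ)] with t ht
    rw [Pi.inv_apply, inv_div]
  have hb : Tendsto (fun t : ℝ => 1/(1+t^2)) atTop (𝓝 0) := by
    have h1 : Tendsto (fun t : ℝ => 1+t^2) atTop atTop :=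
      tendsto_atTop_add_const_left _ 1 (tendsto_pow_atTop (two_ne_zero))
    rw [show (fun t : ℝ => 1/(1+t^2)) = (fun t : ℝ => 1+t^2)⁻¹ by funext t; simp [one_div]]
    exact h1.inv_tendsto_atTop
  have l2 : Tendsto (fun t : ℝ => ((c^2-r^2)*t + 2*r*c)/(2*(1+t^2))) atTop (𝓝 0) := by
    have heq : (fun t : ℝ => ((c^2-r^2)*t + 2*r*c)/(2*(1+t^2)))
        = fun t : ℝ => (c^2-r^2)/2 * (t/(1+t^2)) + r*c*(1/(1+t^2)) := by
      funext t
      have : (1:ℝ)+t^2 ≠ 0 := by positivity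
      field_simp
    rw [heq]
    have := (ha.const_mul ((c^2-r^2)/2)).add (hb.const_mul (r*c))
    simpa using this
  have := l1.add l2
  simpa using this

lemma tail_Ioi {r : ℝ} (hr : 0 < r) (c : ℝ) :
    ∫ t in Ioi (c/r), (r*t-c)^2/(1+t^2)^2
      = (r^2+c^2)/2 * (π/2 - arctan (c/r)) - r*c/2 := by
  have hr' : r ≠ 0 := ne_of_gt hr
  have h := integral_Ioi_of_hasDerivAt_of_nonneg
    (g := fun t : ℝ => (r^2+c^2)/2 * arctan t + ((c^2-r^2)*t + 2*r*c)/(2*(1+t^2)))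
    (g' := fun t : ℝ => (r*t-c)^2/(1+t^2)^2) (a := c/r) (l := (r^2+c^2)/2 * (π/2))
    (hasDerivAt_H r c (c/r)).continuousAt.continuousWithinAt
    (fun x _ => hasDerivAt_H r c x)
    (fun x _ => by positivity)
    (tendsto_H r c)
  have hv : ((c^2-r^2)*(c/r) + 2*r*c)/(2*(1+(c/r)^2)) = r*c/2 := by
    field_simp
    ring
  have h2 : ∫ t in Ioi (c/r), (r*t-c)^2/(1+t^2)^2
      = (r^2+c^2)/2 * (π/2)
        - ((r^2+c^2)/2 * arctan (c/r) + ((c^2-r^2)*(c/r) + 2*r*c)/(2*(1+(c/r)^2))) := h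
  rw [h2, hv]
  ring

lemma tail_Iic {r : ℝ} (hr : 0 < r) (c : ℝ) :
    ∫ t in Iic (-(c/r)), (r*t+c)^2/(1+t^2)^2
      = (r^2+c^2)/2 * (π/2 - arctan (c/r)) - r*c/2 := by
  rw [← integral_comp_neg_Ioi (c/r) (fun t : ℝ => (r*t+c)^2/(1+t^2)^2)]
  rw [← tail_Ioi hr c]
  apply setIntegral_congr_fun measurableSet_Ioi
  intro x _
  ring

lemma line_integral {s r : ℝ} (hr : 0 < r) (hs : s ∈ Set.Icc (-1:ℝ) 1) :
    ∫ t : ℝ, mfun s r t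
      = ((r^2+(1-s)^2)/2 * (π/2 - arctan ((1-s)/r)) - r*(1-s)/2)
      + ((r^2+(1+s)^2)/2 * (π/2 - arctan ((1+s)/r)) - r*(1+s)/2) := by
  have h1s : (0:ℝ) ≤ 1 - s := by linarith [hs.2]
  have h2s : (0:ℝ) ≤ 1 + s := by linarith [hs.1]
  have hint := integrable_mfun s r
  have ha : -((1+s)/r) ≤ (1-s)/r := by
    have d1 := div_nonneg h1s hr.le
    have d2 := div_nonneg h2s hr.le
    linarith
  rw [← intervalIntegral.integral_Iic_add_Ioi (b := -((1+s)/r)) hint.integrableOn hint.integrableOn]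
  have hIic : ∫ t in Iic (-((1+s)/r)), mfun s r t
      = (r^2+(1+s)^2)/2 * (π/2 - arctan ((1+s)/r)) - r*(1+s)/2 := by
    rw [← tail_Iic hr (1+s)]
    apply setIntegral_congr_fun measurableSet_Iic
    intro t ht
    have ht' : t ≤ -((1+s)/r) := ht
    have h3 : r*t ≤ -(1+s) := by
      calc r*t = t*r := by ring
      _ ≤ (-((1+s)/r))*r := mul_le_mul_of_nonneg_right ht' hr.le
      _ = -(1+s) := by field_simp
    unfold mfun
    rw [abs_of_nonpos (by linarith), min_eq_left (by linarith)]
    rw [show (1 - -(s+r*t))^2 = (r*t+(1+s))^2 by ring]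
  have hIoi : ∫ t in Ioi (-((1+s)/r)), mfun s r t
      = (r^2+(1-s)^2)/2 * (π/2 - arctan ((1-s)/r)) - r*(1-s)/2 := by
    rw [show Ioi (-((1+s)/r)) = Ioc (-((1+s)/r)) ((1-s)/r) ∪ Ioi ((1-s)/r) from
      (Ioc_union_Ioi_eq_Ioi ha).symm]
    rw [setIntegral_union (Ioc_disjoint_Ioi le_rfl) measurableSet_Ioi
      hint.integrableOn hint.integrableOn]
    have hmid : ∫ t in Ioc (-((1+s)/r)) ((1-s)/r), mfun s r t = 0 := by
      rw [setIntegral_congr_fun measurableSet_Ioc (g := fun _ => (0:ℝ)) ?_]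
      · simp
      · intro t ht
        have hl : -((1+s)/r) < t := ht.1
        have hu : t ≤ (1-s)/r := ht.2
        have h3 : r*t ≤ 1-s := by
          calc r*t = t*r := by ring
          _ ≤ ((1-s)/r)*r := mul_le_mul_of_nonneg_right hu hr.le
          _ = 1-s := by field_simp
        have h4 : -(1+s) ≤ r*t := by
          calc -(1+s) = (-((1+s)/r))*r := by field_simp
          _ ≤ t*r := mul_le_mul_of_nonneg_right hl.le hr.le
          _ = r*t := by ring
        have habs : |s + r*t| ≤ 1 := abs_le.mpr ⟨by linarith, by linarith⟩
        unfold mfun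
        rw [min_eq_right (by linarith)]
        simp
    rw [hmid, zero_add, ← tail_Ioi hr (1-s)]
    apply setIntegral_congr_fun measurableSet_Ioi
    intro t ht
    have ht' : (1-s)/r < t := ht
    have h3 : 1-s ≤ r*t := by
      calc 1-s = ((1-s)/r)*r := by field_simp
      _ ≤ t*r := mul_le_mul_of_nonneg_right ht'.le hr.le
      _ = r*t := by ring
    unfold mfun
    rw [abs_of_nonneg (by linarith), min_eq_left (by linarith)]
    rw [show (1 - (s+r*t))^2 = (r*t-(1-s))^2 by ring]
  rw [hIic, hIoi]
  ring

lemma cd_eq_myC {s r : ℝ} (hr : 0 ≤ r) (hs : s ∈ Set.Icc (-1:ℝ) 1) :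
    cd s r = myC s r := by
  rcases eq_or_lt_of_le hr with h0 | h0
  · rw [← h0, cd_zero hs, myC, if_pos rfl]
  · rw [cd_eq_volume s r, polar_step, halfrange, tansub, line_integral h0 hs,
      myC, if_neg (ne_of_gt h0)]
    have hπ : (π:ℝ) ≠ 0 := pi_ne_zero
    field_simp
    ring

/-! ### Calculus part -/

lemma calpha_pos {α : ℝ} (hα : 2 < α) : 0 < calpha α := by
  unfold calpha
  have h1 : 0 < π/α := div_pos pi_pos (by linarith)
  have h2 : π/α < π/2 := by
    apply div_lt_div_of_pos_left pi_pos (by linarith) hα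
  exact div_pos one_pos (Real.tan_pos_of_pos_of_lt_pi_div_two h1 h2)

lemma ralpha_nonneg {α s : ℝ} (hα : 2 < α) (hs : s ∈ Set.Icc (-1:ℝ) 1) :
    0 ≤ ralpha α s := by
  unfold ralpha
  have hs1 := hs.1
  have hs2 := hs.2
  have h1 : calpha α ^2 ≤ calpha α ^2 + 1 - s^2 := by nlinarith
  have h2 := Real.sqrt_le_sqrt h1
  rw [Real.sqrt_sq (calpha_pos hα).le] at h2
  linarith

lemma ralpha_pos_iff {α s : ℝ} (hα : 2 < α) (hs : s ∈ Set.Icc (-1:ℝ) 1) :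
    0 < ralpha α s ↔ s^2 < 1 := by
  have hs1 := hs.1
  have hs2 := hs.2
  have hc := calpha_pos hα
  have hnn : (0:ℝ) ≤ calpha α ^2 + 1 - s^2 := by nlinarith
  unfold ralpha
  constructor
  · intro h
    have h2 : calpha α < Real.sqrt (calpha α ^2 + 1 - s^2) := by linarith
    have h3 : calpha α ^2 < calpha α ^2 + 1 - s^2 := (Real.lt_sqrt hc.le).mp h2
    nlinarith
  · intro h
    have h3 : calpha α ^2 < calpha α ^2 + 1 - s^2 := by nlinarith
    have h2 : calpha α < Real.sqrt (calpha α ^2 + 1 - s^2) := by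
      have := Real.sqrt_lt_sqrt (by positivity) h3
      rwa [Real.sqrt_sq hc.le] at this
    linarith

lemma psi_strictMono {s : ℝ} (hs : s ∈ Set.Icc (-1:ℝ) 1) {r₁ r₂ : ℝ}
    (h1 : 0 < r₁) (h2 : r₁ < r₂) : psi s r₁ < psi s r₂ := by
  have hs1 := hs.1
  have hs2 := hs.2
  have hr2 : 0 < r₂ := lt_trans h1 h2
  have key : ∀ c : ℝ, 0 ≤ c → arctan (c/r₂) ≤ arctan (c/r₁) := by
    intro c hc
    exact Real.arctan_strictMono.monotone (div_le_div_of_nonneg_left hc h1 h2.le)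
  have keys : ∀ c : ℝ, 0 < c → arctan (c/r₂) < arctan (c/r₁) := by
    intro c hc
    exact Real.arctan_strictMono (div_lt_div_of_pos_left hc h1 h2)
  unfold psi
  rcases lt_or_eq_of_le hs2 with h | h
  · have k1 := keys (1-s) (by linarith)
    have k2 := key (1+s) (by linarith)
    linarith
  · have k1 := key (1-s) (by linarith)
    have k2 := keys (1+s) (by linarith)
    linarith

lemma psi_ralpha {α s : ℝ} (hα : 2 < α) (hs : s ∈ Set.Icc (-1:ℝ) 1)
    (hpos : 0 < ralpha α s) : psi s (ralpha α s) = π / α := by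
  have hc : 0 < calpha α := calpha_pos hα
  have hs2 : s^2 < 1 := (ralpha_pos_iff hα hs).mp hpos
  have h1s : 0 < 1 - s := by nlinarith
  have h2s : 0 < 1 + s := by nlinarith
  set R := ralpha α s with hR
  have hkey : (R + calpha α)^2 = calpha α ^2 + 1 - s^2 := by
    rw [hR]
    unfold ralpha
    rw [sub_add_cancel]
    exact Real.sq_sqrt (by nlinarith)
  have h2cR : R^2 + 2*calpha α*R = 1 - s^2 := by nlinarith
  have hRlt : R^2 < 1 - s^2 := by nlinarith
  have e1 : π/2 - arctan ((1-s)/R) = arctan (R/(1-s)) := by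
    rw [← Real.arctan_inv_of_pos (div_pos h1s hpos), inv_div]
  have e2 : π/2 - arctan ((1+s)/R) = arctan (R/(1+s)) := by
    rw [← Real.arctan_inv_of_pos (div_pos h2s hpos), inv_div]
  unfold psi
  rw [e1, e2]
  have hprod : R/(1-s) * (R/(1+s)) < 1 := by
    rw [div_mul_div_comm, div_lt_one (by nlinarith)]
    nlinarith
  rw [Real.arctan_add hprod]
  have htan : Real.tan (π/α) = 1/calpha α := by
    unfold calpha
    rw [one_div_one_div]
  have hπα1 : 0 < π/α := div_pos pi_pos (by linarith)
  have hπα2 : π/α < π/2 := div_lt_div_of_pos_left pi_pos (by linarith) hα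
  have harg : (R/(1-s) + R/(1+s))/(1 - R/(1-s) * (R/(1+s))) = Real.tan (π/α) := by
    rw [htan]
    have hd : 1 - R/(1-s) * (R/(1+s)) ≠ 0 := by
      rw [div_mul_div_comm]
      have : R*R/((1-s)*(1+s)) < 1 := by
        rw [div_lt_one (by nlinarith)]; nlinarith
      linarith
    rw [div_eq_div_iff hd (by positivity)]
    have h1s' : (1-s) ≠ 0 := ne_of_gt h1s
    have h2s' : (1+s) ≠ 0 := ne_of_gt h2s
    field_simp
    nlinarith [h2cR]
  rw [harg]
  exact Real.arctan_tan (by linarith) hπα2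

lemma psi_lt {α s r : ℝ} (hα : 2 < α) (hs : s ∈ Set.Icc (-1:ℝ) 1)
    (h0 : 0 < r) (h1 : r < ralpha α s) : psi s r < π / α := by
  have hpos : 0 < ralpha α s := lt_trans h0 h1
  calc psi s r < psi s (ralpha α s) := psi_strictMono hs h0 h1
  _ = π / α := psi_ralpha hα hs hpos

lemma psi_gt {α s r : ℝ} (hα : 2 < α) (hs : s ∈ Set.Icc (-1:ℝ) 1)
    (h1 : ralpha α s < r) : π / α < psi s r := by
  have hπα2 : π/α < π/2 := div_lt_div_of_pos_left pi_pos (by linarith) hα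
  rcases eq_or_lt_of_le (ralpha_nonneg hα hs) with hR0 | hRpos
  · have hr0 : 0 < r := by rw [← hR0] at h1; exact h1
    have hs2 : ¬ s^2 < 1 := by
      intro h
      have := (ralpha_pos_iff hα hs).mpr h
      rw [← hR0] at this
      exact lt_irrefl 0 this
    have hs2' : s^2 = 1 := le_antisymm (by nlinarith [hs.1, hs.2]) (not_lt.mp hs2)
    have hcases : s = 1 ∨ s = -1 := by
      have : (s-1)*(s+1) = 0 := by nlinarith
      rcases mul_eq_zero.mp this with h | h
      · left; linarith
      · right; linarith
    unfold psi
    rcases hcases with h | h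
    · rw [h]
      simp only [sub_self, zero_div, Real.arctan_zero, sub_zero]
      have t2 : arctan ((1+1)/r) < π/2 := Real.arctan_lt_pi_div_two _
      linarith
    · rw [h]
      have heq : (1:ℝ) + (-1) = 0 := by ring
      rw [heq]
      simp only [zero_div, Real.arctan_zero, sub_zero]
      have t2 : arctan ((1-(-1))/r) < π/2 := Real.arctan_lt_pi_div_two _
      linarith
  · calc π/α = psi s (ralpha α s) := (psi_ralpha hα hs hRpos).symm
    _ < psi s r := psi_strictMono hs hRpos h1

lemma hasDerivAt_phi {α s r : ℝ} (hr : 0 < r) :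
    HasDerivAt (fun x : ℝ => x^2 - α * myC s x) (2*r*(1 - α/π * psi s r)) r := by
  have hne : ∀ᶠ x in nhds r, x ≠ 0 := eventually_ne_nhds (ne_of_gt hr)
  have heq : (fun x : ℝ => x^2 - α * myC s x) =ᶠ[nhds r]
      (fun x : ℝ => x^2 - α * ((1/π) * ((x^2+(1-s)^2) * (π/2 - arctan ((1-s)/x))
           + (x^2+(1+s)^2) * (π/2 - arctan ((1+s)/x)) - 2*x))) := by
    filter_upwards [hne] with x hx
    rw [myC, if_neg hx]
  refine HasDerivAt.congr_of_eventuallyEq ?_ heq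
  have hterm : ∀ c : ℝ, HasDerivAt (fun x : ℝ => (x^2+c^2) * (π/2 - arctan (c/x)))
      (2*r*(π/2 - arctan (c/r)) + c) r := by
    intro c
    have h1 : HasDerivAt (fun x:ℝ => x^2 + c^2) (2*r) r := by
      simpa using (hasDerivAt_pow 2 r).add_const (c^2)
    have h2 : HasDerivAt (fun x:ℝ => c/x) (c * (-(r^2)⁻¹)) r := by
      simpa [div_eq_mul_inv] using (hasDerivAt_inv (ne_of_gt hr)).const_mul c
    have h3 : HasDerivAt (fun x:ℝ => π/2 - arctan (c/x))
        (-(1/(1+(c/r)^2) * (c * (-(r^2)⁻¹)))) r :=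
      ((Real.hasDerivAt_arctan (c/r)).comp r h2).const_sub (π/2)
    have h4 := h1.mul h3
    refine h4.congr_deriv ?_
    have hr0 : r ≠ 0 := ne_of_gt hr
    have hd : 1 + (c/r)^2 ≠ 0 := by positivity
    field_simp
  have H1 := hterm (1-s)
  have H2 := hterm (1+s)
  have H3 : HasDerivAt (fun x:ℝ => 2*x) 2 r := by
    simpa using (hasDerivAt_id r).const_mul 2
  have H4 := ((H1.add H2).sub H3).const_mul (1/π)
  have H5 := (hasDerivAt_pow 2 r).sub (H4.const_mul α)
  refine H5.congr_deriv ?_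
  unfold psi
  have hπ : π ≠ 0 := pi_ne_zero
  field_simp
  ring

lemma continuousOn_phi (α s : ℝ) (hs : s ∈ Set.Icc (-1:ℝ) 1) :
    ContinuousOn (fun x : ℝ => x^2 - α * myC s x) (Ici 0) := by
  have hterm : ∀ c : ℝ, 0 ≤ c →
      Tendsto (fun x : ℝ => (x^2+c^2) * (π/2 - arctan (c/x))) (nhdsWithin 0 (Ioi 0)) (nhds 0) := by
    intro c hc
    rcases eq_or_lt_of_le hc with h0 | h0
    · have : (fun x : ℝ => (x^2+c^2) * (π/2 - arctan (c/x))) = fun x : ℝ => x^2 * (π/2) := by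
        funext x
        rw [← h0]
        simp
      rw [this]
      have : Tendsto (fun x : ℝ => x^2 * (π/2)) (nhds 0) (nhds 0) := by
        have h5 : Tendsto (fun x : ℝ => x^2 * (π/2)) (nhds 0) (nhds ((0:ℝ)^2 * (π/2))) :=
          ((continuous_pow 2).mul continuous_const).tendsto (0:ℝ)
        simpa using h5
      exact this.mono_left nhdsWithin_le_nhds
    · have harctan : Tendsto (fun x : ℝ => arctan (c/x)) (nhdsWithin 0 (Ioi 0)) (nhds (π/2)) := by
        have h1 : Tendsto (fun x : ℝ => c/x) (nhdsWithin 0 (Ioi 0)) atTop := by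
          simp only [div_eq_mul_inv]
          exact tendsto_inv_nhdsGT_zero.const_mul_atTop h0
        exact (Real.tendsto_arctan_atTop.mono_right nhdsWithin_le_nhds).comp h1
      have hsq : Tendsto (fun x : ℝ => x^2+c^2) (nhdsWithin 0 (Ioi 0)) (nhds (c^2)) := by
        have : Tendsto (fun x : ℝ => x^2+c^2) (nhds 0) (nhds (0^2+c^2)) :=
          ((continuous_pow 2).add continuous_const).tendsto (0:ℝ)
        simpa using this.mono_left nhdsWithin_le_nhds
      have hfin : Tendsto (fun x : ℝ => (x^2+c^2) * (π/2 - arctan (c/x)))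
          (nhdsWithin 0 (Ioi 0)) (nhds (c^2 * (π/2 - π/2))) :=
        hsq.mul ((tendsto_const_nhds (x := π/2)).sub harctan)
      simpa using hfin
  have hmyC : ∀ (x:ℝ), x ∈ Ici (0:ℝ) → ContinuousWithinAt (myC s) (Ici 0) x := by
    intro x hx
    rcases eq_or_lt_of_le (mem_Ici.mp hx) with h0 | h0
    · subst h0
      have hval : myC s 0 = 0 := by rw [myC, if_pos rfl]
      unfold ContinuousWithinAt
      rw [hval]
      rw [show Ici (0:ℝ) = insert 0 (Ioi 0) by rw [Set.Ioi_insert], nhdsWithin_insert]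
      rw [tendsto_sup]
      constructor
      · rw [tendsto_pure_left]
        intro u hu
        simpa [hval] using mem_of_mem_nhds hu
      · have hbranch : Tendsto (fun x : ℝ => (1/π) * ((x^2+(1-s)^2) * (π/2 - arctan ((1-s)/x))
             + (x^2+(1+s)^2) * (π/2 - arctan ((1+s)/x)) - 2*x)) (nhdsWithin 0 (Ioi 0)) (nhds 0) := by
          have h1 := hterm (1-s) (by linarith [hs.2])
          have h2 := hterm (1+s) (by linarith [hs.1])
          have h3 : Tendsto (fun x : ℝ => 2*x) (nhdsWithin 0 (Ioi 0)) (nhds 0) := by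
            have h6 : Tendsto (fun x : ℝ => 2*x) (nhds 0) (nhds (2*(0:ℝ))) :=
              (continuous_const.mul continuous_id).tendsto (0:ℝ)
            simpa using h6.mono_left nhdsWithin_le_nhds
          have := ((h1.add h2).sub h3).const_mul (1/π)
          simpa using this
        apply hbranch.congr'
        filter_upwards [eventually_mem_nhdsWithin] with x hx
        rw [myC, if_neg (ne_of_gt hx)]
    · have hx0 : x ≠ 0 := ne_of_gt h0
      apply ContinuousAt.continuousWithinAt
      have : ContinuousAt (fun x : ℝ => (1/π) * ((x^2+(1-s)^2) * (π/2 - arctan ((1-s)/x))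
           + (x^2+(1+s)^2) * (π/2 - arctan ((1+s)/x)) - 2*x)) x := by
        have harct : ∀ c : ℝ, ContinuousAt (fun x : ℝ => arctan (c/x)) x :=
          fun c => Real.continuous_arctan.continuousAt.comp
            ((continuousAt_const.div continuousAt_id hx0))
        fun_prop (disch := exact hx0)
      apply this.congr
      filter_upwards [eventually_ne_nhds hx0] with y hy
      rw [myC, if_neg hy]
  intro x hx
  exact ((continuous_pow 2).continuousWithinAt).sub
    ((continuousWithinAt_const).mul (hmyC x hx))

end Stmt12Aux

open Stmt12Aux in
/-- **Lemma.** For `α > 2` and `s ∈ [-1,1]`, `r ↦ r² - α c_d(s,r)` on `[0,∞)` has the unique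
global maximizer `r_α(s)`. -/
theorem stmt12 (α : ℝ) (hα : 2 < α) (s : ℝ) (hs : s ∈ Set.Icc (-1 : ℝ) 1) :
    ∀ r : ℝ, 0 ≤ r → r ≠ ralpha α s →
      r ^ 2 - α * cd s r < ralpha α s ^ 2 - α * cd s (ralpha α s) := by
  intro r hr hne
  have hRnn := ralpha_nonneg hα hs
  have hπ : (0:ℝ) < π := pi_pos
  have hα0 : (0:ℝ) < α := by linarith
  rw [cd_eq_myC hr hs, cd_eq_myC hRnn hs]
  have key_pos : ∀ x : ℝ, 0 < x → x < ralpha α s →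
      0 < deriv (fun y : ℝ => y^2 - α * myC s y) x := by
    intro x hx0 hx1
    rw [(hasDerivAt_phi (α := α) (s := s) hx0).deriv]
    have h1 : psi s x < π/α := psi_lt hα hs hx0 hx1
    have h2 : α/π * psi s x < 1 := by
      rw [div_mul_eq_mul_div, div_lt_one hπ]
      calc α * psi s x < α * (π/α) := mul_lt_mul_of_pos_left h1 hα0
      _ = π := by field_simp
    nlinarith
  have key_neg : ∀ x : ℝ, ralpha α s < x →
      deriv (fun y : ℝ => y^2 - α * myC s y) x < 0 := by
    intro x hx1
    have hx0 : 0 < x := lt_of_le_of_lt hRnn hx1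
    rw [(hasDerivAt_phi (α := α) (s := s) hx0).deriv]
    have h1 : π/α < psi s x := psi_gt hα hs hx1
    have h2 : 1 < α/π * psi s x := by
      rw [div_mul_eq_mul_div, lt_div_iff₀ hπ]
      calc 1 * π = α * (π/α) := by field_simp
      _ < α * psi s x := mul_lt_mul_of_pos_left h1 hα0
    nlinarith
  rcases lt_or_gt_of_ne hne with hlt | hgt
  · have hmono : StrictMonoOn (fun y : ℝ => y^2 - α * myC s y) (Icc 0 (ralpha α s)) := by
      apply strictMonoOn_of_deriv_pos (convex_Icc _ _)
        ((continuousOn_phi α s hs).mono Icc_subset_Ici_self)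
      intro x hx
      rw [interior_Icc] at hx
      exact key_pos x hx.1 hx.2
    exact hmono ⟨hr, hlt.le⟩ ⟨hRnn, le_rfl⟩ hlt
  · have hanti : StrictAntiOn (fun y : ℝ => y^2 - α * myC s y) (Ici (ralpha α s)) := by
      apply strictAntiOn_of_deriv_neg (convex_Ici _)
        ((continuousOn_phi α s hs).mono (Ici_subset_Ici.mpr hRnn))
      intro x hx
      rw [interior_Ici] at hx
      exact key_neg x hx
    exact hanti (self_mem_Ici) (mem_Ici.mpr hgt.le) hgt
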